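/- Let G be an abelian subgroup of GL(V) preserving a pointed generating closed convex cone C, such that every element of G is semisimple with all eigenvalues on the unit circle (i.e., each element generates a bounded subgroup). Then G itself is bounded in GL(V), and hence has a fixed point in the interior of C. -/

import Mathlib

open Set

section Aux

variable {V : Type*} [NormedAddCommGroup V] [NormedSpace ℝ V] [FiniteDimensional ℝ V]

/-- Mean ergodic trick: if the powers of `g` are uniformly bounded, then `g` has a fixed
point in the closed convex hull of any orbit. -/
private lemma cesaro_fixed (g : V ≃L[ℝ] V) (M : ℝ)
    (hM : ∀ n : ℕ, ‖((g ^ n : V ≃L[ℝ] V) : V →L[ℝ] V)‖ ≤ M) (v : V) :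
    ∃ w ∈ closure (convexHull ℝ (Set.range fun n : ℕ => (g ^ n : V ≃L[ℝ] V) v)),
      g w = w := by
  set f : ℕ → V := fun n => (g ^ n : V ≃L[ℝ] V) v with hf
  have hfb : ∀ n, ‖f n‖ ≤ M * ‖v‖ := by
    intro n
    have h1 : ‖f n‖ ≤ ‖((g ^ n : V ≃L[ℝ] V) : V →L[ℝ] V)‖ * ‖v‖ :=
      ((g ^ n : V ≃L[ℝ] V) : V →L[ℝ] V).le_opNorm v
    exact h1.trans (mul_le_mul_of_nonneg_right (hM n) (norm_nonneg v))
  set R := M * ‖v‖ with hR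
  have hR0 : 0 ≤ R := le_trans (norm_nonneg (f 0)) (hfb 0)
  set b : ℕ → V := fun N => ((N : ℝ) + 1)⁻¹ • ∑ n ∈ Finset.range (N + 1), f n with hb
  have hpos : ∀ N : ℕ, (0 : ℝ) < (N : ℝ) + 1 := fun N => by positivity
  have hbmem : ∀ N, b N ∈ convexHull ℝ (Set.range f) := by
    intro N
    have := (convex_convexHull ℝ (Set.range f)).sum_mem
      (t := Finset.range (N + 1)) (w := fun _ => ((N : ℝ) + 1)⁻¹) (z := f)
      (fun i _ => by positivity)
      (by simp [Finset.sum_const, Finset.card_range, nsmul_eq_mul,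
            mul_inv_cancel₀ (hpos N).ne'])
      (fun i _ => subset_convexHull ℝ _ (Set.mem_range_self i))
    simpa [hb, Finset.smul_sum] using this
  have hbnorm : ∀ N, ‖b N‖ ≤ R := by
    intro N
    have h1 : ‖∑ n ∈ Finset.range (N + 1), f n‖ ≤ ((N : ℝ) + 1) * R := by
      calc ‖∑ n ∈ Finset.range (N + 1), f n‖ ≤ ∑ n ∈ Finset.range (N + 1), ‖f n‖ :=
            norm_sum_le _ _
        _ ≤ ((N : ℝ) + 1) * R := by
            have := Finset.sum_le_card_nsmul (Finset.range (N + 1))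
              (fun n => ‖f n‖) R (fun i _ => hfb i)
            simpa [Finset.card_range, nsmul_eq_mul] using this
    have h2 : ‖b N‖ = ((N : ℝ) + 1)⁻¹ * ‖∑ n ∈ Finset.range (N + 1), f n‖ := by
      simp only [hb]
      rw [norm_smul, Real.norm_eq_abs, abs_of_pos (inv_pos.2 (hpos N))]
    rw [h2]
    calc ((N : ℝ) + 1)⁻¹ * ‖∑ n ∈ Finset.range (N + 1), f n‖
        ≤ ((N : ℝ) + 1)⁻¹ * (((N : ℝ) + 1) * R) :=
          mul_le_mul_of_nonneg_left h1 (inv_pos.2 (hpos N)).le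
      _ = R := by field_simp
  obtain ⟨w, hwball, φ, hφ, hconv⟩ :=
    (isCompact_closedBall (0 : V) R).tendsto_subseq
      (fun N => mem_closedBall_zero_iff.2 (hbnorm N))
  refine ⟨w, ?_, ?_⟩
  · exact mem_closure_of_tendsto hconv (Filter.Eventually.of_forall fun k => hbmem (φ k))
  · have hdiff : ∀ N, g (b N) - b N = ((N : ℝ) + 1)⁻¹ • (f (N + 1) - f 0) := by
      intro N
      have hstep : ∀ n : ℕ, g (f n) = f (n + 1) := by
        intro n
        show g ((g ^ n) v) = (g ^ (n + 1)) v
        rw [pow_succ']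
        rfl
      have h1 : g (b N) = ((N : ℝ) + 1)⁻¹ • ∑ n ∈ Finset.range (N + 1), f (n + 1) := by
        rw [hb, map_smul, map_sum]
        simp only [hstep]
      rw [h1, hb, ← smul_sub, ← Finset.sum_sub_distrib, Finset.sum_range_sub]
    have hto : Filter.Tendsto (fun N => g (b N) - b N) Filter.atTop (nhds 0) := by
      apply squeeze_zero_norm (a := fun N : ℕ => ((N : ℝ) + 1)⁻¹ * (R + R))
      · intro N
        rw [hdiff N, norm_smul]
        have : ‖f (N + 1) - f 0‖ ≤ R + R :=
          (norm_sub_le _ _).trans (add_le_add (hfb _) (hfb _))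
        calc ‖((N : ℝ) + 1)⁻¹‖ * ‖f (N + 1) - f 0‖
            = ((N : ℝ) + 1)⁻¹ * ‖f (N + 1) - f 0‖ := by
              rw [Real.norm_eq_abs, abs_of_pos (inv_pos.2 (hpos N))]
          _ ≤ ((N : ℝ) + 1)⁻¹ * (R + R) :=
              mul_le_mul_of_nonneg_left this (inv_pos.2 (hpos N)).le
      · have h0 : Filter.Tendsto (fun N : ℕ => ((N : ℝ) + 1)⁻¹) Filter.atTop (nhds 0) := by
          simpa using (tendsto_one_div_add_atTop_nhds_zero_nat :
            Filter.Tendsto (fun n : ℕ => 1 / ((n : ℝ) + 1)) Filter.atTop (nhds 0))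
        simpa using h0.mul_const (R + R)
    have h2 : Filter.Tendsto (fun k => g (b (φ k)) - b (φ k)) Filter.atTop (nhds 0) :=
      hto.comp hφ.tendsto_atTop
    have h3 : Filter.Tendsto (fun k => g (b (φ k)) - b (φ k)) Filter.atTop
        (nhds (g w - w)) :=
      (((g.continuous.tendsto w).comp hconv).sub hconv)
    have := tendsto_nhds_unique h3 h2
    exact sub_eq_zero.1 this

end Aux

/-- Lemma 3.2, last part: an abelian subgroup `G` of `GL(V)` preserving a pointed
generating closed convex cone `C`, all of whose elements are elliptic (each generates a
relatively compact subgroup of `GL(V)`), is itself bounded in `GL(V)`, and hence has a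
fixed point in the interior of `C`. -/
theorem abelian_elliptic_elements_bounded_and_fixed_point
    {V : Type*} [NormedAddCommGroup V] [NormedSpace ℝ V] [FiniteDimensional ℝ V]
    (C : Set V) (hCclosed : IsClosed C) (hCconv : Convex ℝ C)
    (hCcone : ∀ (t : ℝ) (v : V), 0 ≤ t → v ∈ C → t • v ∈ C)
    (hCpointed : C ∩ (-C) = {(0 : V)})
    (hCgen : ∀ v : V, ∃ c₁ ∈ C, ∃ c₂ ∈ C, v = c₁ - c₂)
    (G : Subgroup (V ≃L[ℝ] V))
    (hab : ∀ g ∈ G, ∀ h ∈ G, g * h = h * g)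
    (hCinv : ∀ g ∈ G, g '' C = C)
    (hell : ∀ g ∈ G, IsCompact (closure
      (Set.range (fun n : ℤ => ((g ^ n : V ≃L[ℝ] V) : V →L[ℝ] V))))) :
    IsCompact (closure ((fun g : V ≃L[ℝ] V => (g : V →L[ℝ] V)) '' (G : Set (V ≃L[ℝ] V)))) ∧
      ∃ v ∈ interior C, ∀ g ∈ G, g v = v := by
  classical
  -- 0 ∈ C
  have h0C : (0 : V) ∈ C := by
    have : (0 : V) ∈ C ∩ (-C) := by rw [hCpointed]; rfl
    exact this.1
  -- C spans V
  have hspan : Submodule.span ℝ C = ⊤ := by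
    rw [eq_top_iff]
    rintro v -
    obtain ⟨c₁, h₁, c₂, h₂, rfl⟩ := hCgen v
    exact sub_mem (Submodule.subset_span h₁) (Submodule.subset_span h₂)
  -- interior of C is nonempty
  have hint : (interior C).Nonempty := by
    rw [hCconv.interior_nonempty_iff_affineSpan_eq_top]
    rw [← AffineSubspace.coe_eq_univ_iff]
    have : (affineSpan ℝ C : Set V) = ((Submodule.span ℝ C : Submodule ℝ V) : Set V) := by
      rw [← affineSpan_insert_zero, Set.insert_eq_self.2 h0C]
    rw [this, hspan]
    rfl
  -- forward invariance of C under integer powers of elements of G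
  have hzpowC : ∀ g ∈ G, ∀ n : ℤ, ∀ x ∈ C, (g ^ n : V ≃L[ℝ] V) x ∈ C := by
    intro g hg
    have hfwd : ∀ x ∈ C, g x ∈ C := fun x hx =>
      (hCinv g hg) ▸ Set.mem_image_of_mem g hx
    have hbwd : ∀ x ∈ C, g⁻¹ x ∈ C := by
      intro x hx
      rw [← hCinv g hg] at hx
      obtain ⟨y, hy, rfl⟩ := hx
      have : (g⁻¹ : V ≃L[ℝ] V) (g y) = y := g.symm_apply_apply y
      rw [this]; exact hy
    have hnat : ∀ (h : V ≃L[ℝ] V), (∀ x ∈ C, h x ∈ C) →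
        ∀ n : ℕ, ∀ x ∈ C, (h ^ n : V ≃L[ℝ] V) x ∈ C := by
      intro h hh n
      induction n with
      | zero => intro x hx; rw [pow_zero]; exact hx
      | succ n ih =>
        intro x hx
        have heq : (h ^ (n + 1) : V ≃L[ℝ] V) x = (h ^ n : V ≃L[ℝ] V) (h x) := by
          rw [pow_succ]; rfl
        rw [heq]; exact ih _ (hh x hx)
    intro n x hx
    rcases Int.eq_nat_or_neg n with ⟨k, rfl | rfl⟩
    · rw [zpow_natCast]; exact hnat g hfwd k x hx
    · rw [zpow_neg, zpow_natCast, ← inv_pow]; exact hnat g⁻¹ hbwd k x hx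
  -- uniform bound on powers of an elliptic element
  have hMbd : ∀ g ∈ G, ∃ M : ℝ,
      ∀ n : ℤ, ‖((g ^ n : V ≃L[ℝ] V) : V →L[ℝ] V)‖ ≤ M := by
    intro g hg
    obtain ⟨M, hM⟩ := isBounded_iff_forall_norm_le.1 (hell g hg).isBounded
    exact ⟨M, fun n => hM _ (subset_closure (Set.mem_range_self n))⟩
  -- main finite induction
  have key : ∀ s : Finset (V ≃L[ℝ] V), ↑s ⊆ (G : Set (V ≃L[ℝ] V)) →
      ∃ (v : V) (δ : ℝ), 0 < δ ∧ (∀ u : V, ‖u‖ ≤ δ → v + u ∈ C) ∧ ∀ g ∈ s, g v = v := by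
    intro s
    induction s using Finset.induction_on with
    | empty =>
      intro _
      obtain ⟨v, hv⟩ := hint
      obtain ⟨ε, hε, hball⟩ := Metric.isOpen_iff.1 isOpen_interior v hv
      refine ⟨v, ε / 2, by positivity, ?_, by simp⟩
      intro u hu
      have : v + u ∈ Metric.ball v ε := by
        rw [Metric.mem_ball, dist_eq_norm]
        simpa using lt_of_le_of_lt hu (by linarith)
      exact interior_subset (hball this)
    | @insert a s ha ih =>
      intro hsub
      have haG : a ∈ G := hsub (Finset.mem_insert_self a s)
      have hsG : ↑s ⊆ (G : Set (V ≃L[ℝ] V)) := fun x hx =>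
        hsub (Finset.mem_insert_of_mem hx)
      obtain ⟨v, δ, hδ, hball, hfix⟩ := ih hsG
      obtain ⟨M, hM⟩ := hMbd a haG
      set M' := max M 1 with hM'def
      have hM'pos : (0 : ℝ) < M' := lt_of_lt_of_le one_pos (le_max_right _ _)
      have hM' : ∀ n : ℤ, ‖((a ^ n : V ≃L[ℝ] V) : V →L[ℝ] V)‖ ≤ M' := fun n =>
        (hM n).trans (le_max_left _ _)
      obtain ⟨w, hw, hwfix⟩ := cesaro_fixed a M'
        (fun n : ℕ => by simpa using hM' (n : ℤ)) v
      set δ' := δ / M' with hδ'def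
      set S := {x : V | (∀ u : V, ‖u‖ ≤ δ' → x + u ∈ C) ∧ ∀ g ∈ s, g x = x} with hSdef
      have hSclosed : IsClosed S := by
        have hrw : S = (⋂ (u : V) (_ : ‖u‖ ≤ δ'), {x : V | x + u ∈ C}) ∩
            (⋂ (g : V ≃L[ℝ] V) (_ : g ∈ s), {x : V | g x = x}) := by
          ext x
          simp [hSdef, Set.mem_iInter]
        rw [hrw]
        refine IsClosed.inter ?_ ?_
        · exact isClosed_iInter fun u => isClosed_iInter fun _ =>
            hCclosed.preimage (continuous_id.add continuous_const)
        · exact isClosed_iInter fun g => isClosed_iInter fun _ =>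
            isClosed_eq g.continuous continuous_id
      have hSconvex : Convex ℝ S := by
        intro x hx y hy t1 t2 ht1 ht2 hsum
        constructor
        · intro u hu
          have heq : t1 • x + t2 • y + u = t1 • (x + u) + t2 • (y + u) := by
            have hrhs : t1 • (x + u) + t2 • (y + u)
                = t1 • x + t2 • y + (t1 + t2) • u := by
              rw [smul_add, smul_add, add_smul]; abel
            rw [hrhs, hsum, one_smul]
          rw [heq]
          exact hCconv (hx.1 u hu) (hy.1 u hu) ht1 ht2 hsum
        · intro g hg
          have : g (t1 • x + t2 • y) = t1 • g x + t2 • g y := by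
            rw [map_add, map_smul, map_smul]
          rw [this, hx.2 g hg, hy.2 g hg]
      have horbS : ∀ n : ℕ, (a ^ n : V ≃L[ℝ] V) v ∈ S := by
        intro n
        constructor
        · intro u hu
          have hu' : ‖(a ^ (-(n : ℤ)) : V ≃L[ℝ] V) u‖ ≤ δ := by
            have h1 := ((a ^ (-(n : ℤ)) : V ≃L[ℝ] V) : V →L[ℝ] V).le_opNorm u
            calc ‖(a ^ (-(n : ℤ)) : V ≃L[ℝ] V) u‖
                ≤ M' * ‖u‖ := h1.trans
                  (mul_le_mul_of_nonneg_right (hM' _) (norm_nonneg u))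
              _ ≤ M' * δ' := mul_le_mul_of_nonneg_left hu hM'pos.le
              _ = δ := by rw [hδ'def]; field_simp
          have hvC : v + (a ^ (-(n : ℤ)) : V ≃L[ℝ] V) u ∈ C := hball _ hu'
          have hmem := hzpowC a haG (n : ℤ) _ hvC
          have heq : (a ^ (n : ℤ) : V ≃L[ℝ] V) (v + (a ^ (-(n : ℤ)) : V ≃L[ℝ] V) u)
              = (a ^ n : V ≃L[ℝ] V) v + u := by
            have hcancel : (a ^ (n : ℤ) : V ≃L[ℝ] V) ((a ^ (-(n : ℤ)) : V ≃L[ℝ] V) u)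
                = u := by
              have hone : ((a ^ (n : ℤ)) * (a ^ (-(n : ℤ))) : V ≃L[ℝ] V) = 1 := by
                rw [← zpow_add, add_neg_cancel, zpow_zero]
              calc (a ^ (n : ℤ) : V ≃L[ℝ] V) ((a ^ (-(n : ℤ)) : V ≃L[ℝ] V) u)
                  = ((a ^ (n : ℤ)) * (a ^ (-(n : ℤ))) : V ≃L[ℝ] V) u := rfl
                _ = u := by rw [hone]; rfl
            rw [map_add, hcancel, zpow_natCast]
          rw [← heq]; exact hmem
        · intro g hg
          have hgG : g ∈ G := hsG (Finset.mem_coe.2 hg)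
          have hcomm : g * a ^ n = a ^ n * g := by
            have hc : Commute g a := hab g hgG a haG
            exact (hc.pow_right n).eq
          calc g ((a ^ n : V ≃L[ℝ] V) v) = ((g * a ^ n : V ≃L[ℝ] V)) v := rfl
            _ = ((a ^ n * g : V ≃L[ℝ] V)) v := by rw [hcomm]
            _ = (a ^ n : V ≃L[ℝ] V) (g v) := rfl
            _ = (a ^ n : V ≃L[ℝ] V) v := by rw [hfix g hg]
      have hwS : w ∈ S := by
        have hsub2 : closure (convexHull ℝ
            (Set.range fun n : ℕ => (a ^ n : V ≃L[ℝ] V) v)) ⊆ S :=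
          closure_minimal (convexHull_min (Set.range_subset_iff.2 horbS) hSconvex) hSclosed
        exact hsub2 hw
      refine ⟨w, δ', div_pos hδ hM'pos, hwS.1, ?_⟩
      intro g hg
      rcases Finset.mem_insert.1 hg with rfl | hgs
      · exact hwfix
      · exact hwS.2 g hgs
  -- fixed submodules
  set wSub : Finset (V ≃L[ℝ] V) → Submodule ℝ V := fun s =>
    ⨅ g ∈ s, LinearMap.ker (((g : V →L[ℝ] V) : V →ₗ[ℝ] V) - LinearMap.id) with hwSub
  have hmem : ∀ (s : Finset (V ≃L[ℝ] V)) (x : V), x ∈ wSub s ↔ ∀ g ∈ s, g x = x := by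
    intro s x
    simp [hwSub, Submodule.mem_iInf, LinearMap.mem_ker, LinearMap.sub_apply, sub_eq_zero]
  set ranks : Set ℕ := {n | ∃ s : Finset (V ≃L[ℝ] V),
      ↑s ⊆ (G : Set (V ≃L[ℝ] V)) ∧ Module.finrank ℝ (wSub s) = n} with hranks
  have hne : ranks.Nonempty := ⟨_, ∅, by simp, rfl⟩
  obtain ⟨s₀, hs₀G, hs₀rank⟩ := Nat.sInf_mem hne
  obtain ⟨v, δ, hδ, hball, hfix⟩ := key s₀ hs₀G
  have hfixall : ∀ g ∈ G, g v = v := by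
    intro g hg
    have hsub' : ↑(insert g s₀) ⊆ (G : Set (V ≃L[ℝ] V)) := by
      intro x hx
      rcases Finset.mem_insert.1 (Finset.mem_coe.1 hx) with rfl | h
      · exact hg
      · exact hs₀G (Finset.mem_coe.2 h)
    have hle : wSub (insert g s₀) ≤ wSub s₀ := by
      intro x hx
      rw [hmem] at hx ⊢
      exact fun h hh => hx h (Finset.mem_insert_of_mem hh)
    have hrank : Module.finrank ℝ (wSub s₀) ≤ Module.finrank ℝ (wSub (insert g s₀)) := by
      rw [hs₀rank]
      exact Nat.sInf_le ⟨insert g s₀, hsub', rfl⟩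
    have heq : wSub (insert g s₀) = wSub s₀ :=
      Submodule.eq_of_le_of_finrank_le hle hrank
    have hv : v ∈ wSub s₀ := (hmem _ v).2 hfix
    rw [← heq] at hv
    exact (hmem _ v).1 hv g (Finset.mem_insert_self g s₀)
  have hvC : v ∈ C := by simpa using hball 0 (by simp [hδ.le])
  have hvint : v ∈ interior C := by
    refine mem_interior.2 ⟨Metric.ball v δ, ?_, Metric.isOpen_ball, Metric.mem_ball_self hδ⟩
    intro x hx
    have hxv : ‖x - v‖ ≤ δ := by
      rw [Metric.mem_ball, dist_eq_norm] at hx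
      exact hx.le
    have := hball (x - v) hxv
    simpa using this
  -- order interval
  set D := {x : V | v - x ∈ C ∧ v + x ∈ C} with hDdef
  have hDbd : ∃ R : ℝ, ∀ x ∈ D, ‖x‖ ≤ R := by
    by_contra hcon
    push_neg at hcon
    choose x hxD hxn using fun k : ℕ => hcon (k : ℝ)
    have hxpos : ∀ k, (0 : ℝ) < ‖x k‖ := fun k =>
      lt_of_le_of_lt (Nat.cast_nonneg k) (hxn k)
    set u : ℕ → V := fun k => ‖x k‖⁻¹ • x k with hu
    have husph : ∀ k, u k ∈ Metric.sphere (0 : V) 1 := by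
      intro k
      rw [mem_sphere_zero_iff_norm]
      rw [hu]
      simp [norm_smul, abs_of_pos (inv_pos.2 (hxpos k)), inv_mul_cancel₀ (hxpos k).ne']
    obtain ⟨z, hz, φ, hφ, hcv⟩ := (isCompact_sphere (0 : V) 1).tendsto_subseq husph
    have hnormz : ‖z‖ = 1 := mem_sphere_zero_iff_norm.1 hz
    have htendv : Filter.Tendsto (fun k => ‖x (φ k)‖⁻¹ • v) Filter.atTop (nhds 0) := by
      have h1 : Filter.Tendsto (fun k => ‖x (φ k)‖) Filter.atTop Filter.atTop := by
        apply Filter.tendsto_atTop_mono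
          (f := fun k : ℕ => (k : ℝ)) ?_ tendsto_natCast_atTop_atTop
        intro k
        calc (k : ℝ) ≤ (φ k : ℝ) := Nat.cast_le.2 (hφ.le_apply)
          _ ≤ ‖x (φ k)‖ := (hxn (φ k)).le
      have h2 := (tendsto_inv_atTop_zero.comp h1).smul_const v
      simpa using h2
    have hzC : z ∈ C := by
      have hmemc : ∀ k, ‖x (φ k)‖⁻¹ • v + u (φ k) ∈ C := by
        intro k
        have := hCcone (‖x (φ k)‖⁻¹) (v + x (φ k))
          (inv_nonneg.2 (norm_nonneg _)) (hxD (φ k)).2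
        simpa [smul_add, hu] using this
      have hlim : Filter.Tendsto (fun k => ‖x (φ k)‖⁻¹ • v + u (φ k))
          Filter.atTop (nhds z) := by
        simpa using htendv.add hcv
      exact hCclosed.mem_of_tendsto hlim (Filter.Eventually.of_forall hmemc)
    have hzC' : -z ∈ C := by
      have hmemc : ∀ k, ‖x (φ k)‖⁻¹ • v - u (φ k) ∈ C := by
        intro k
        have := hCcone (‖x (φ k)‖⁻¹) (v - x (φ k))
          (inv_nonneg.2 (norm_nonneg _)) (hxD (φ k)).1
        simpa [smul_sub, hu] using this
      have hlim : Filter.Tendsto (fun k => ‖x (φ k)‖⁻¹ • v - u (φ k))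
          Filter.atTop (nhds (-z)) := by
        simpa using htendv.sub hcv
      exact hCclosed.mem_of_tendsto hlim (Filter.Eventually.of_forall hmemc)
    have : z ∈ C ∩ (-C) := ⟨hzC, by simpa [Set.mem_neg] using hzC'⟩
    rw [hCpointed] at this
    rw [Set.mem_singleton_iff] at this
    rw [this, norm_zero] at hnormz
    exact one_ne_zero hnormz.symm
  obtain ⟨R, hR⟩ := hDbd
  have h0D : (0 : V) ∈ D := by
    constructor <;> simpa using hvC
  have hR0 : 0 ≤ R := le_trans (norm_nonneg (0 : V)) (hR 0 h0D)
  have hDinv : ∀ g ∈ G, ∀ x ∈ D, g x ∈ D := by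
    intro g hg x hx
    have hfwd : ∀ y ∈ C, g y ∈ C := fun y hy =>
      (hCinv g hg) ▸ Set.mem_image_of_mem g hy
    constructor
    · have h2 : g (v - x) = v - g x := by rw [map_sub, hfixall g hg]
      exact h2 ▸ hfwd _ hx.1
    · have h2 : g (v + x) = v + g x := by rw [map_add, hfixall g hg]
      exact h2 ▸ hfwd _ hx.2
  have hop : ∀ g ∈ G, ‖(g : V →L[ℝ] V)‖ ≤ R / δ := by
    intro g hg
    refine ContinuousLinearMap.opNorm_le_bound _ (div_nonneg hR0 hδ.le) ?_
    intro x
    rcases eq_or_ne x 0 with rfl | hx0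
    · simp
    · have hxn : (0 : ℝ) < ‖x‖ := norm_pos_iff.2 hx0
      set y := (δ / ‖x‖) • x with hy
      have hny : ‖y‖ ≤ δ := by
        rw [hy, norm_smul, Real.norm_eq_abs, abs_of_pos (div_pos hδ hxn),
          div_mul_cancel₀ _ hxn.ne']
      have hyD : y ∈ D := by
        constructor
        · have := hball (-y) (by simpa using hny)
          simpa [sub_eq_add_neg] using this
        · exact hball y hny
      have h1 : ‖g y‖ ≤ R := hR _ (hDinv g hg y hyD)
      have h2 : g y = (δ / ‖x‖) • g x := by rw [hy, map_smul]
      have h3 : (δ / ‖x‖) * ‖g x‖ ≤ R := by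
        have : ‖g y‖ = (δ / ‖x‖) * ‖g x‖ := by
          rw [h2, norm_smul, Real.norm_eq_abs, abs_of_pos (div_pos hδ hxn)]
        linarith [this ▸ h1]
      have h4 : ‖(g : V →L[ℝ] V) x‖ = (‖x‖ / δ) * ((δ / ‖x‖) * ‖g x‖) := by
        rw [ContinuousLinearEquiv.coe_coe, ← mul_assoc, div_mul_div_comm, mul_comm ‖x‖ δ,
          div_self (mul_pos hδ hxn).ne', one_mul]
      rw [h4]
      calc (‖x‖ / δ) * ((δ / ‖x‖) * ‖g x‖) ≤ (‖x‖ / δ) * R :=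
            mul_le_mul_of_nonneg_left h3 (div_nonneg hxn.le hδ.le)
        _ = R / δ * ‖x‖ := by ring
  constructor
  · have hsubset : ((fun g : V ≃L[ℝ] V => (g : V →L[ℝ] V)) '' (G : Set (V ≃L[ℝ] V)))
        ⊆ Metric.closedBall 0 (R / δ) := by
      rintro _ ⟨g, hg, rfl⟩
      rw [Metric.mem_closedBall, dist_zero_right]
      exact hop g hg
    exact (isCompact_closedBall (0 : V →L[ℝ] V) (R / δ)).of_isClosed_subset
      isClosed_closure (closure_minimal hsubset Metric.isClosed_closedBall)
  · exact ⟨v, hvint, hfixall⟩
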